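/- In a quasicategory K, composition is associative up to homotopy: given edges f : w → x, g : x → y, h : y → z, an edge p that is a composite of f and g, an edge q that is a composite of g and h, an edge u that is a composite of p and h, and an edge v that is a composite of f and q, the edges u and v from w to z are homotopic. -/

import Mathlib

open CategoryTheory Simplicial

namespace SSet

/-- `f` is an edge of `S` from the vertex `x` to the vertex `y`: `d₁ f = x` and `d₀ f = y`. -/
def IsEdge (S : SSet) (x y : S _⦋0⦌) (f : S _⦋1⦌) : Prop :=
  S.δ 1 f = x ∧ S.δ 0 f = y

/-- Two edges `f, g` of `S` with target `y` are homotopic if there is a 2-simplex `σ` with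
`d₂ σ = f`, `d₀ σ` the degenerate edge at `y`, and `d₁ σ = g`. -/
def Homotopic (S : SSet) (y : S _⦋0⦌) (f g : S _⦋1⦌) : Prop :=
  ∃ τ : S _⦋2⦌, S.δ 2 τ = f ∧ S.δ 0 τ = S.σ 0 y ∧ S.δ 1 τ = g

/-- An edge `h` is a composite of edges `f` and `g` if there is a 2-simplex `σ` with
`d₂ σ = f`, `d₀ σ = g` and `d₁ σ = h`. -/
def IsComposite (S : SSet) (f g h : S _⦋1⦌) : Prop :=
  ∃ τ : S _⦋2⦌, S.δ 2 τ = f ∧ S.δ 0 τ = g ∧ S.δ 1 τ = h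

end SSet

namespace AssocAux

open SSet SimplexCategory

universe u

lemma factorSpec {x : SimplexCategory} {n : ℕ} (f : x ⟶ ⦋n + 1⦌) (j : Fin (n + 2))
    (hj : ∀ k, f.toOrderHom k ≠ j) :
    (f ≫ SimplexCategory.σ (Fin.predAbove 0 j)) ≫ SimplexCategory.δ j = f := by
  induction x using SimplexCategory.rec with
  | _ m => exact factor_δ_spec f j hj

/-- Filling an inner 3-horn given by three compatible 2-simplices. -/
lemma fill3 (S : SSet.{u}) [SSet.Quasicategory S] (i : Fin 4) (h0 : 0 < i)
    (hn : i < Fin.last 3) (F : Fin 4 → S _⦋2⦌)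
    (hF : ∀ (a b : Fin 4) (_ : a < b), a ≠ i → b ≠ i →
      S.δ (⟨a.1, by omega⟩ : Fin 3) (F b) = S.δ (⟨b.1 - 1, by omega⟩ : Fin 3) (F a)) :
    ∃ τ : S _⦋3⦌, ∀ j (_ : j ≠ i), S.δ j τ = F j := by
  have hc : horn.IsCompatible (i := i) (fun j _ => yonedaEquiv.symm (F j)) := by
    rw [horn.isCompatible_iff]
    intro j k hj hk hjk
    rw [stdSimplex.δ_comp_yonedaEquiv_symm, stdSimplex.δ_comp_yonedaEquiv_symm]
    congr 1
    convert (hF j k hjk hj hk).symm using 2 <;> congr 1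
  obtain ⟨φ, hφ⟩ := hc.exists_desc
  obtain ⟨σd, hσd⟩ := Quasicategory.hornFilling h0 hn φ
  refine ⟨yonedaEquiv σd, fun j hj => ?_⟩
  have := hφ j hj
  rw [hσd, ← Category.assoc, horn.ι_ι] at this
  rw [← stdSimplex.yonedaEquiv_δ_comp, this, Equiv.apply_symm_apply]

/-- Elementwise form of relations in the simplex category. -/
lemma elt_eq {S : SSet.{u}} {x y y' z : SimplexCategory} {u : x ⟶ y} {v : y ⟶ z}
    {u' : x ⟶ y'} {v' : y' ⟶ z} (hc : u ≫ v = u' ≫ v') (s : S.obj (Opposite.op z)) :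
    S.map u.op (S.map v.op s) = S.map u'.op (S.map v'.op s) := by
  rw [← FunctorToTypes.map_comp_apply, ← FunctorToTypes.map_comp_apply,
    ← op_comp, ← op_comp, hc]

lemma δδ3 {S : SSet.{u}} {a c : Fin 3} {b d : Fin 4}
    (hc : (SimplexCategory.δ a : (⦋1⦌ : SimplexCategory) ⟶ ⦋2⦌) ≫ SimplexCategory.δ b
      = SimplexCategory.δ c ≫ SimplexCategory.δ d) (τ : S _⦋3⦌) :
    S.δ a (S.δ b τ) = S.δ c (S.δ d τ) :=
  elt_eq hc τ

lemma δδ2 {S : SSet.{u}} {a c : Fin 2} {b d : Fin 3}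
    (hc : (SimplexCategory.δ a : (⦋0⦌ : SimplexCategory) ⟶ ⦋1⦌) ≫ SimplexCategory.δ b
      = SimplexCategory.δ c ≫ SimplexCategory.δ d) (τ : S _⦋2⦌) :
    S.δ a (S.δ b τ) = S.δ c (S.δ d τ) :=
  elt_eq hc τ

lemma δσ_id {S : SSet.{u}} {a : Fin 3}
    (hc : (SimplexCategory.δ a : (⦋1⦌ : SimplexCategory) ⟶ ⦋2⦌) ≫ SimplexCategory.σ 1
      = 𝟙 _) (q : S _⦋1⦌) :
    S.δ a (S.σ 1 q) = q := by
  show S.map (SimplexCategory.δ a).op (S.map (SimplexCategory.σ 1).op q) = q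
  rw [← FunctorToTypes.map_comp_apply, ← op_comp, hc, op_id, FunctorToTypes.map_id_apply]

lemma δ0σ1 {S : SSet.{u}} (q : S _⦋1⦌) : S.δ 0 (S.σ 1 q) = S.σ 0 (S.δ 0 q) :=
  elt_eq (by ext k : 3; fin_cases k <;> decide) q

end AssocAux

open SSet AssocAux in
/-- In a quasicategory `S`, composition is associative up to homotopy: given edges
`f : w → x`, `g : x → y`, `h : y → z`, a composite `p` of `f` and `g`, a composite `q` of
`g` and `h`, a composite `u` of `p` and `h`, and a composite `v` of `f` and `q`, the edges
`u` and `v` from `w` to `z` are homotopic. -/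
theorem composition_associative_up_to_homotopy (S : SSet) [Quasicategory S]
    (w x y z : S _⦋0⦌) (f g h p q u v : S _⦋1⦌)
    (hf : S.IsEdge w x f) (hg : S.IsEdge x y g) (hh : S.IsEdge y z h)
    (hp : S.IsComposite f g p) (hq : S.IsComposite g h q)
    (hu : S.IsComposite p h u) (hv : S.IsComposite f q v) :
    S.Homotopic z u v := by
  obtain ⟨σp, hp2, hp0, hp1⟩ := hp
  obtain ⟨σq, hq2, hq0, hq1⟩ := hq
  obtain ⟨σu, hu2, hu0, hu1⟩ := hu
  obtain ⟨σv, hv2, hv0, hv1⟩ := hv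
  -- the target of `q` is `z`
  have hqz : S.δ 0 q = z := by
    have e := δδ2 (S := S) (a := 0) (b := 1) (c := 0) (d := 0)
      (by ext k : 3; fin_cases k <;> decide) σq
    rw [hq1, hq0] at e
    rw [e, hh.2]
  -- Step 1: fill the horn `Λ[3, 2]` with faces `σq`, `σu`, `σp`
  have hF₁ : ∀ (a b : Fin 4) (_ : a < b), a ≠ (2 : Fin 4) → b ≠ (2 : Fin 4) →
      S.δ (⟨a.1, by omega⟩ : Fin 3) (![σq, σu, σq, σp] b)
        = S.δ (⟨b.1 - 1, by omega⟩ : Fin 3) (![σq, σu, σq, σp] a) := by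
    intro a b hab ha hb
    fin_cases a <;> fin_cases b <;>
      first
      | exact absurd hab (by decide)
      | exact absurd (by decide) ha
      | exact absurd (by decide) hb
      | (show S.δ 0 σu = S.δ 0 σq; rw [hu0, hq0])
      | (show S.δ 0 σp = S.δ 2 σq; rw [hp0, hq2])
      | (show S.δ 1 σp = S.δ 2 σu; rw [hp1, hu2])
  obtain ⟨τ₁, hτ₁⟩ := fill3 S 2 (by decide) (by decide) ![σq, σu, σq, σp] hF₁
  have hτ₁0 : S.δ 0 τ₁ = σq := hτ₁ 0 (by decide)
  have hτ₁1 : S.δ 1 τ₁ = σu := hτ₁ 1 (by decide)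
  have hτ₁3 : S.δ 3 τ₁ = σp := hτ₁ 3 (by decide)
  -- `σ' := d₂ τ₁` exhibits `u` as a composite of `f` and `q`
  set σ' : S _⦋2⦌ := S.δ 2 τ₁ with hσ'
  have hσ'2 : S.δ 2 σ' = f := by
    have e := δδ3 (S := S) (a := 2) (b := 2) (c := 2) (d := 3)
      (by ext k : 3; fin_cases k <;> decide) τ₁
    rw [← hσ'] at e; rw [e, hτ₁3, hp2]
  have hσ'0 : S.δ 0 σ' = q := by
    have e := δδ3 (S := S) (a := 0) (b := 2) (c := 1) (d := 0)
      (by ext k : 3; fin_cases k <;> decide) τ₁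
    rw [← hσ'] at e; rw [e, hτ₁0, hq1]
  have hσ'1 : S.δ 1 σ' = u := by
    have e := δδ3 (S := S) (a := 1) (b := 2) (c := 1) (d := 1)
      (by ext k : 3; fin_cases k <;> decide) τ₁
    rw [← hσ'] at e; rw [e, hτ₁1, hu1]
  -- Step 2: fill the horn `Λ[3, 1]` with faces `s₁ q`, `σv`, `σ'`
  have hF₂ : ∀ (a b : Fin 4) (_ : a < b), a ≠ (1 : Fin 4) → b ≠ (1 : Fin 4) →
      S.δ (⟨a.1, by omega⟩ : Fin 3) (![S.σ 1 q, σv, σv, σ'] b)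
        = S.δ (⟨b.1 - 1, by omega⟩ : Fin 3) (![S.σ 1 q, σv, σv, σ'] a) := by
    intro a b hab ha hb
    fin_cases a <;> fin_cases b <;>
      first
      | exact absurd hab (by decide)
      | exact absurd (by decide) ha
      | exact absurd (by decide) hb
      | (show S.δ 0 σv = S.δ 1 (S.σ 1 q);
          rw [hv0, δσ_id (by ext k : 3; fin_cases k <;> decide)])
      | (show S.δ 0 σ' = S.δ 2 (S.σ 1 q);
          rw [hσ'0, δσ_id (by ext k : 3; fin_cases k <;> decide)])
      | (show S.δ 2 σ' = S.δ 2 σv; rw [hσ'2, hv2])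
  obtain ⟨τ₂, hτ₂⟩ := fill3 S 1 (by decide) (by decide) ![S.σ 1 q, σv, σv, σ'] hF₂
  have hτ₂0 : S.δ 0 τ₂ = S.σ 1 q := hτ₂ 0 (by decide)
  have hτ₂2 : S.δ 2 τ₂ = σv := hτ₂ 2 (by decide)
  have hτ₂3 : S.δ 3 τ₂ = σ' := hτ₂ 3 (by decide)
  refine ⟨S.δ 1 τ₂, ?_, ?_, ?_⟩
  · have e := δδ3 (S := S) (a := 2) (b := 1) (c := 1) (d := 3)
      (by ext k : 3; fin_cases k <;> decide) τ₂
    rw [e, hτ₂3, hσ'1]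
  · have e := δδ3 (S := S) (a := 0) (b := 1) (c := 0) (d := 0)
      (by ext k : 3; fin_cases k <;> decide) τ₂
    rw [e, hτ₂0, δ0σ1, hqz]
  · have e := δδ3 (S := S) (a := 1) (b := 1) (c := 1) (d := 2)
      (by ext k : 3; fin_cases k <;> decide) τ₂
    rw [e, hτ₂2, hv1]
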